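/- Let K ≥ 1 be the number of neighborhoods with sizes n_1,…,n_K ≥ 1, m_k = C(n_k,2), M = ∑_{k=1}^K m_k ≥ 1, N = max_k n_k, let X = ∏_{k=1}^K {0,1}^{m_k}, and let p be an exponential-family pmf with local dependence on X. Let b : X → ℝ^d be a statistic and a ∈ ℝ^d a fixed vector such that |⟨a, b(x) − b(y)⟩| ≤ A·d(x,y)·N for all x,y ∈ X, where A > 0 and d is the Hamming distance. Let E b(X) = ∑_x p(x)·b(x). Then for every ε > 0, the probability under p that |⟨a, b(X) − E b(X)⟩| ≥ ε·M is at most 2·exp(−ε²·M/(2·A²·N⁶)). -/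

import Mathlib

open scoped BigOperators

/-- The sample space of binary within-neighborhood edge variables. -/
abbrev Cfg (K : ℕ) (n : Fin K → ℕ) : Type :=
  (k : Fin K) → Fin (Nat.choose (n k) 2) → Bool

/-- Hamming distance between two configurations: the number of edge coordinates
at which they differ. -/
def hamDist {K : ℕ} {n : Fin K → ℕ} (x y : Cfg K n) : ℕ :=
  ∑ k, (Finset.univ.filter (fun e => x k e ≠ y k e)).card

section AuxMcDiarmid
open Finset


lemma hoeff_step {Ω : Type} [Fintype Ω] (w : Ω → ℝ) (hw : ∀ v, 0 ≤ w v)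
    (hw1 : ∑ v, w v = 1) (Zf : Ω → ℝ) (hmean : ∑ v, w v * Zf v = 0)
    (c : ℝ) (hc : ∀ v, |Zf v| ≤ c) (t : ℝ) :
    ∑ v, w v * Real.exp (t * Zf v) ≤ Real.exp (t ^ 2 * c ^ 2 / 2) := by
  have hne : Nonempty Ω := by
    by_contra h
    rw [not_nonempty_iff] at h
    rw [Finset.univ_eq_empty, Finset.sum_empty] at hw1
    norm_num at hw1
  have hc0 : 0 ≤ c := le_trans (abs_nonneg _) (hc (Classical.arbitrary Ω))
  rcases eq_or_lt_of_le hc0 with hceq | hcpos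
  · have hZ0 : ∀ v, Zf v = 0 := fun v =>
      abs_eq_zero.mp (le_antisymm (hceq ▸ hc v) (abs_nonneg _))
    simp only [hZ0, mul_zero, Real.exp_zero, mul_one, hw1]
    exact Real.one_le_exp (by positivity)
  · calc ∑ v, w v * Real.exp (t * Zf v)
        ≤ ∑ v, w v * (Real.cosh (t * c) + (Zf v / c) * Real.sinh (t * c)) := by
          refine Finset.sum_le_sum fun v _ => mul_le_mul_of_nonneg_left ?_ (hw v)
          have ht : |Zf v / c| ≤ 1 := by
            rw [abs_div, abs_of_pos hcpos, div_le_one hcpos]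
            exact hc v
          have := Real.exp_mul_le_cosh_add_mul_sinh ht (t * c)
          have heq : Zf v / c * (t * c) = t * Zf v := by field_simp
          rwa [heq] at this
      _ = Real.cosh (t * c) * (∑ v, w v)
            + Real.sinh (t * c) / c * (∑ v, w v * Zf v) := by
          rw [Finset.mul_sum, Finset.mul_sum, ← Finset.sum_add_distrib]
          refine Finset.sum_congr rfl fun v _ => by field_simp
      _ = Real.cosh (t * c) := by rw [hw1, hmean]; ring
      _ ≤ Real.exp ((t * c) ^ 2 / 2) := Real.cosh_le_exp_half_sq _
      _ = Real.exp (t ^ 2 * c ^ 2 / 2) := by ring_nf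

lemma mcd_mgf (K : ℕ) : ∀ (Ω : Fin K → Type) (_ : ∀ k, Fintype (Ω k))
    (w : ∀ k, Ω k → ℝ) (_ : ∀ k v, 0 ≤ w k v) (_ : ∀ k, ∑ v, w k v = 1)
    (f : (∀ k, Ω k) → ℝ) (c : Fin K → ℝ)
    (_ : ∀ (x : ∀ k, Ω k) (k : Fin K) (v : Ω k),
      |f (Function.update x k v) - f x| ≤ c k) (t : ℝ),
    ∑ x, (∏ k, w k (x k)) * Real.exp (t * (f x - ∑ y, (∏ k, w k (y k)) * f y))
      ≤ Real.exp (t ^ 2 * (∑ k, c k ^ 2) / 2) := by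
  induction K with
  | zero =>
    intro Ω inst w hw hw1 f c hf t
    haveI : Unique (∀ k : Fin 0, Ω k) := ⟨⟨fun k => k.elim0⟩, fun x => funext fun k => k.elim0⟩
    rw [Fintype.sum_unique, Fintype.sum_unique]
    simp
  | succ K ih =>
    intro Ω inst w hw hw1 f c hf t
    classical
    set e := Fin.consEquiv Ω with he
    -- generic Fubini: sum over the pi type = double sum over cons
    have hsum : ∀ F : (∀ k, Ω k) → ℝ,
        ∑ x, F x = ∑ x' : ∀ i : Fin K, Ω i.succ, ∑ x0 : Ω 0, F (Fin.cons x0 x') := by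
      intro F
      rw [← Equiv.sum_comp e F, Fintype.sum_prod_type]
      rw [Finset.sum_comm]
      rfl
    have hprod : ∀ (x0 : Ω 0) (x' : ∀ i : Fin K, Ω i.succ),
        (∏ k, w k (Fin.cons x0 x' k)) = w 0 x0 * ∏ i, w i.succ (x' i) := by
      intro x0 x'
      rw [Fin.prod_univ_succ]
      simp
    set W' : (∀ i : Fin K, Ω i.succ) → ℝ := fun x' => ∏ i, w i.succ (x' i) with hW'
    set g : (∀ i : Fin K, Ω i.succ) → ℝ := fun x' => ∑ x0, w 0 x0 * f (Fin.cons x0 x') with hg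
    have hW'nn : ∀ x', 0 ≤ W' x' := fun x' => Finset.prod_nonneg fun i _ => hw _ _
    -- E f = E g
    have hEf : (∑ y, (∏ k, w k (y k)) * f y) = ∑ x', W' x' * g x' := by
      rw [hsum fun y => (∏ k, w k (y k)) * f y]
      refine Finset.sum_congr rfl fun x' _ => ?_
      rw [hg, Finset.mul_sum]
      refine Finset.sum_congr rfl fun x0 _ => by rw [hprod]; ring
    set Ef := ∑ y, (∏ k, w k (y k)) * f y with hEfdef
    -- inner Hoeffding bound
    have hinner : ∀ x', ∑ x0, w 0 x0 * Real.exp (t * (f (Fin.cons x0 x') - g x'))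
        ≤ Real.exp (t ^ 2 * c 0 ^ 2 / 2) := by
      intro x'
      refine hoeff_step (w 0) (hw 0) (hw1 0) _ ?_ (c 0) ?_ t
      · have : ∑ x0, w 0 x0 * (f (Fin.cons x0 x') - g x')
            = (∑ x0, w 0 x0 * f (Fin.cons x0 x')) - (∑ x0, w 0 x0) * g x' := by
          rw [Finset.sum_mul, ← Finset.sum_sub_distrib]
          exact Finset.sum_congr rfl fun x0 _ => by ring
        rw [this, hw1 0, hg]; ring
      · intro x0
        have : f (Fin.cons x0 x') - g x'
            = ∑ x0', w 0 x0' * (f (Fin.cons x0 x') - f (Fin.cons x0' x')) := by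
          have h2 : ∑ x0', w 0 x0' * (f (Fin.cons x0 x') - f (Fin.cons x0' x'))
              = (∑ x0', w 0 x0') * f (Fin.cons x0 x') - ∑ x0', w 0 x0' * f (Fin.cons x0' x') := by
            rw [Finset.sum_mul, ← Finset.sum_sub_distrib]
            exact Finset.sum_congr rfl fun x0' _ => by ring
          rw [h2, hw1 0, hg]; ring
        rw [this]
        calc |∑ x0', w 0 x0' * (f (Fin.cons x0 x') - f (Fin.cons x0' x'))|
            ≤ ∑ x0', |w 0 x0' * (f (Fin.cons x0 x') - f (Fin.cons x0' x'))| :=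
              Finset.abs_sum_le_sum_abs _ _
          _ ≤ ∑ x0', w 0 x0' * c 0 := by
              refine Finset.sum_le_sum fun x0' _ => ?_
              rw [abs_mul, abs_of_nonneg (hw 0 x0')]
              refine mul_le_mul_of_nonneg_left ?_ (hw 0 x0')
              have h1 : Fin.cons x0 x' = Function.update (Fin.cons x0' x') 0 x0 :=
                (Fin.update_cons_zero x0' x' x0).symm
              rw [h1]
              exact hf _ 0 x0
          _ = c 0 := by rw [← Finset.sum_mul, hw1 0, one_mul]
    -- outer: g has bounded differences
    have hgbd : ∀ (x' : ∀ i : Fin K, Ω i.succ) (i : Fin K) (v : Ω i.succ),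
        |g (Function.update x' i v) - g x'| ≤ c i.succ := by
      intro x' i v
      have : g (Function.update x' i v) - g x'
          = ∑ x0, w 0 x0 * (f (Function.update (Fin.cons x0 x') i.succ v) - f (Fin.cons x0 x')) := by
        simp only [hg]
        rw [← Finset.sum_sub_distrib]
        refine Finset.sum_congr rfl fun x0 _ => ?_
        rw [← Fin.cons_update]
        ring
      rw [this]
      calc _ ≤ ∑ x0, |w 0 x0 * (f (Function.update (Fin.cons x0 x') i.succ v) - f (Fin.cons x0 x'))| :=
            Finset.abs_sum_le_sum_abs _ _
        _ ≤ ∑ x0, w 0 x0 * c i.succ := by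
            refine Finset.sum_le_sum fun x0 _ => ?_
            rw [abs_mul, abs_of_nonneg (hw 0 x0)]
            exact mul_le_mul_of_nonneg_left (hf _ i.succ v) (hw 0 x0)
        _ = c i.succ := by rw [← Finset.sum_mul, hw1 0, one_mul]
    -- main computation
    have key : ∑ x, (∏ k, w k (x k)) * Real.exp (t * (f x - Ef))
        = ∑ x', (W' x' * Real.exp (t * (g x' - Ef))) *
            (∑ x0, w 0 x0 * Real.exp (t * (f (Fin.cons x0 x') - g x'))) := by
      rw [hsum fun x => (∏ k, w k (x k)) * Real.exp (t * (f x - Ef))]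
      refine Finset.sum_congr rfl fun x' _ => ?_
      rw [Finset.mul_sum]
      refine Finset.sum_congr rfl fun x0 _ => ?_
      rw [hprod]
      rw [show t * (f (Fin.cons x0 x') - Ef)
          = t * (f (Fin.cons x0 x') - g x') + t * (g x' - Ef) by ring, Real.exp_add]
      ring
    calc ∑ x, (∏ k, w k (x k)) * Real.exp (t * (f x - Ef))
        ≤ ∑ x', (W' x' * Real.exp (t * (g x' - Ef))) * Real.exp (t ^ 2 * c 0 ^ 2 / 2) := by
          rw [key]
          refine Finset.sum_le_sum fun x' _ => ?_
          exact mul_le_mul_of_nonneg_left (hinner x') (mul_nonneg (hW'nn x') (Real.exp_nonneg _))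
      _ = Real.exp (t ^ 2 * c 0 ^ 2 / 2) *
            ∑ x', W' x' * Real.exp (t * (g x' - Ef)) := by
          rw [Finset.mul_sum]
          exact Finset.sum_congr rfl fun _ _ => by ring
      _ ≤ Real.exp (t ^ 2 * c 0 ^ 2 / 2) *
            Real.exp (t ^ 2 * (∑ i : Fin K, c i.succ ^ 2) / 2) := by
          refine mul_le_mul_of_nonneg_left ?_ (Real.exp_nonneg _)
          have := ih (fun i => Ω i.succ) (fun i => inst i.succ) (fun i => w i.succ)
            (fun i v => hw i.succ v) (fun i => hw1 i.succ) g (fun i => c i.succ) hgbd t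
          rw [hEf]
          exact this
      _ = Real.exp (t ^ 2 * (∑ k : Fin (K+1), c k ^ 2) / 2) := by
          rw [← Real.exp_add, Fin.sum_univ_succ]; ring_nf


lemma chernoff_fin {X : Type} [Fintype X] (W : X → ℝ) (hW : ∀ x, 0 ≤ W x)
    (gg : X → ℝ) (t lam : ℝ) (hlam : 0 ≤ lam) [DecidablePred fun x => t ≤ gg x] :
    ∑ x ∈ Finset.univ.filter (fun x => t ≤ gg x), W x
      ≤ Real.exp (-(lam * t)) * ∑ x, W x * Real.exp (lam * gg x) := by
  calc ∑ x ∈ Finset.univ.filter (fun x => t ≤ gg x), W x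
      ≤ ∑ x ∈ Finset.univ.filter (fun x => t ≤ gg x),
          W x * (Real.exp (-(lam * t)) * Real.exp (lam * gg x)) := by
        refine Finset.sum_le_sum fun x hx => ?_
        rw [Finset.mem_filter] at hx
        rw [← Real.exp_add]
        nth_rewrite 1 [← mul_one (W x)]
        refine mul_le_mul_of_nonneg_left ?_ (hW x)
        refine Real.one_le_exp ?_
        have := mul_le_mul_of_nonneg_left hx.2 hlam
        linarith
    _ ≤ ∑ x, W x * (Real.exp (-(lam * t)) * Real.exp (lam * gg x)) := by
        refine Finset.sum_le_sum_of_subset_of_nonneg (Finset.filter_subset _ _) ?_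
        intro x _ _
        exact mul_nonneg (hW x) (by positivity)
    _ = Real.exp (-(lam * t)) * ∑ x, W x * Real.exp (lam * gg x) := by
        rw [Finset.mul_sum]
        exact Finset.sum_congr rfl fun x _ => by ring

end AuxMcDiarmid

open Finset in
/-- Lemma B.1 of the paper, with the unspecified constant made explicit:
concentration of the linear statistic `⟨a, b(X)⟩` under an exponential-family pmf
with local dependence.  If `|⟨a, b(x) − b(y)⟩| ≤ A·d(x,y)·N` for the Hamming
distance `d`, then for every `ε > 0`,
`P(|⟨a, b(X) − E b(X)⟩| ≥ ε·M) ≤ 2·exp(−ε²·M/(2·A²·N⁶))`. -/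
theorem statement2
    (K : ℕ) (hK : 1 ≤ K)
    (n : Fin K → ℕ) (hn : ∀ k, 1 ≤ n k)
    (hM : 1 ≤ ∑ k, Nat.choose (n k) 2)
    (N : ℕ) (hNub : ∀ k, n k ≤ N) (hNmem : ∃ k, n k = N)
    (dk : Fin K → ℕ)
    (η : (k : Fin K) → Fin (dk k) → ℝ)
    (s : (k : Fin K) → (Fin (Nat.choose (n k) 2) → Bool) → Fin (dk k) → ℝ)
    (Z : ℝ)
    (hZ : Z = ∑ x : Cfg K n, Real.exp (∑ k, ∑ i, η k i * s k (x k) i))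
    (p : Cfg K n → ℝ)
    (hp : ∀ x, p x = Real.exp (∑ k, ∑ i, η k i * s k (x k) i) / Z)
    (d : ℕ)
    (b : Cfg K n → Fin d → ℝ)
    (a : Fin d → ℝ)
    (A : ℝ) (hA : 0 < A)
    (hab : ∀ x y : Cfg K n,
      |∑ i, a i * (b x i - b y i)| ≤ A * (hamDist x y : ℝ) * (N : ℝ)) :
    ∀ ε : ℝ, 0 < ε →
      (∑' x : {x : Cfg K n //
          ε * (∑ k, ((Nat.choose (n k) 2 : ℝ))) ≤
            |∑ i, a i * (b x i - ∑ y : Cfg K n, p y * b y i)|}, p x.1) ≤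
        2 * Real.exp (-(ε ^ 2 * (∑ k, ((Nat.choose (n k) 2 : ℝ)))) /
          (2 * A ^ 2 * (N : ℝ) ^ 6)) := by
  intro ε hε
  -- basic positivity facts
  have hN1 : 1 ≤ N := le_trans (hn ⟨0, hK⟩) (hNub ⟨0, hK⟩)
  have hNR : (1 : ℝ) ≤ (N : ℝ) := by exact_mod_cast hN1
  have hZpos : 0 < Z := by
    rw [hZ]
    exact Finset.sum_pos (fun x _ => Real.exp_pos _) ⟨fun _ _ => false, Finset.mem_univ _⟩
  have hppos : ∀ x, 0 ≤ p x := fun x => by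
    rw [hp]; exact div_nonneg (Real.exp_nonneg _) hZpos.le
  -- per-neighborhood weights
  set Zk : (k : Fin K) → ℝ :=
    fun k => ∑ u : Fin (Nat.choose (n k) 2) → Bool, Real.exp (∑ i, η k i * s k u i) with hZkdef
  have hZkpos : ∀ k, 0 < Zk k := fun k =>
    Finset.sum_pos (fun u _ => Real.exp_pos _) ⟨fun _ => false, Finset.mem_univ _⟩
  set w : (k : Fin K) → (Fin (Nat.choose (n k) 2) → Bool) → ℝ :=
    fun k u => Real.exp (∑ i, η k i * s k u i) / Zk k with hwdef
  have hw : ∀ k u, 0 ≤ w k u := fun k u => div_nonneg (Real.exp_nonneg _) (hZkpos k).le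
  have hw1 : ∀ k, ∑ u, w k u = 1 := fun k => by
    rw [hwdef]
    rw [← Finset.sum_div, div_self (hZkpos k).ne']
  have hZprod : Z = ∏ k, Zk k := by
    rw [hZ, hZkdef, Fintype.prod_sum (f := fun k u => Real.exp (∑ i, η k i * s k u i))]
    exact Finset.sum_congr rfl fun x _ => Real.exp_sum _ _
  have hpW : ∀ x : Cfg K n, p x = ∏ k, w k (x k) := by
    intro x
    rw [hp, hwdef, hZprod, Real.exp_sum, Finset.prod_div_distrib]
  -- the statistic
  set f : Cfg K n → ℝ := fun x => ∑ i, a i * b x i with hfdef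
  set Ef : ℝ := ∑ y : Cfg K n, p y * f y with hEfdef
  have hEfx : ∀ x : Cfg K n,
      (∑ i, a i * (b x i - ∑ y : Cfg K n, p y * b y i)) = f x - Ef := by
    intro x
    have swap : Ef = ∑ i, a i * ∑ y : Cfg K n, p y * b y i := by
      rw [hEfdef]
      calc ∑ y : Cfg K n, p y * f y
          = ∑ y : Cfg K n, ∑ i, p y * (a i * b y i) := by
            exact Finset.sum_congr rfl fun y _ => by rw [hfdef, Finset.mul_sum]
        _ = ∑ i, ∑ y : Cfg K n, p y * (a i * b y i) := Finset.sum_comm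
        _ = ∑ i, a i * ∑ y : Cfg K n, p y * b y i := by
            refine Finset.sum_congr rfl fun i _ => ?_
            rw [Finset.mul_sum]
            exact Finset.sum_congr rfl fun y _ => by ring
    rw [swap, hfdef, ← Finset.sum_sub_distrib]
    exact Finset.sum_congr rfl fun i _ => by ring
  -- bounded differences
  set c : Fin K → ℝ := fun k => A * (Nat.choose (n k) 2 : ℝ) * N with hcdef
  have hbd : ∀ (x : Cfg K n) (k : Fin K) (v : Fin (Nat.choose (n k) 2) → Bool),
      |f (Function.update x k v) - f x| ≤ c k := by
    intro x k v
    have h1 : f (Function.update x k v) - f x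
        = ∑ i, a i * (b (Function.update x k v) i - b x i) := by
      rw [hfdef, ← Finset.sum_sub_distrib]
      exact Finset.sum_congr rfl fun i _ => by ring
    rw [h1]
    refine le_trans (hab _ _) ?_
    rw [hcdef]
    have hham : (hamDist (Function.update x k v) x : ℝ) ≤ (Nat.choose (n k) 2 : ℝ) := by
      have h2 : hamDist (Function.update x k v) x ≤ Nat.choose (n k) 2 := by
        unfold hamDist
        rw [Finset.sum_eq_single_of_mem k (Finset.mem_univ k)]
        · calc (Finset.univ.filter
                (fun e => Function.update x k v k e ≠ x k e)).card
              ≤ (Finset.univ : Finset (Fin (Nat.choose (n k) 2))).card :=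
                Finset.card_filter_le _ _
            _ = Nat.choose (n k) 2 := by simp
        · intro k' _ hk'
          rw [Function.update_of_ne hk']
          simp
      exact_mod_cast h2
    exact mul_le_mul_of_nonneg_right (mul_le_mul_of_nonneg_left hham hA.le) (Nat.cast_nonneg N)
  -- variance proxy
  set V : ℝ := ∑ k, c k ^ 2 with hVdef
  have hex : ∃ k, 1 ≤ Nat.choose (n k) 2 := by
    by_contra h
    push_neg at h
    have h0 : ∑ k, Nat.choose (n k) 2 = 0 :=
      Finset.sum_eq_zero fun k _ => Nat.lt_one_iff.mp (h k)
    omega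
  obtain ⟨k0, hk0⟩ := hex
  have hVpos : 0 < V := by
    have hck0 : 0 < c k0 := by
      show (0:ℝ) < A * ((Nat.choose (n k0) 2 : ℝ)) * N
      have h3 : (1 : ℝ) ≤ (Nat.choose (n k0) 2 : ℝ) := by exact_mod_cast hk0
      exact mul_pos (mul_pos hA (lt_of_lt_of_le one_pos h3)) (lt_of_lt_of_le one_pos hNR)
    calc (0:ℝ) < c k0 ^ 2 := by positivity
      _ ≤ V := Finset.single_le_sum (fun k _ => sq_nonneg (c k)) (Finset.mem_univ k0)
  set MR : ℝ := ∑ k, ((Nat.choose (n k) 2 : ℝ)) with hMRdef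
  have hMR1 : (1 : ℝ) ≤ MR := by
    rw [hMRdef]
    have h4 : ((1:ℕ) : ℝ) ≤ ((∑ k, Nat.choose (n k) 2 : ℕ) : ℝ) := by exact_mod_cast hM
    push_cast at h4
    simpa using h4
  have hMRpos : 0 < MR := lt_of_lt_of_le one_pos hMR1
  set t : ℝ := ε * MR with htdef
  have htpos : 0 < t := mul_pos hε hMRpos
  set lam : ℝ := t / V with hlamdef
  have hlampos : 0 < lam := div_pos htpos hVpos
  -- V ≤ A² N⁶ MR
  have hVle : V ≤ A ^ 2 * (N:ℝ) ^ 6 * MR := by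
    rw [hVdef, hMRdef, Finset.mul_sum]
    refine Finset.sum_le_sum fun k _ => ?_
    have hmle : ((Nat.choose (n k) 2 : ℝ)) ≤ (N:ℝ) ^ 2 := by
      have h1 : Nat.choose (n k) 2 ≤ N * N := by
        calc Nat.choose (n k) 2 ≤ n k * n k := by
              rw [Nat.choose_two_right]
              calc n k * (n k - 1) / 2 ≤ n k * (n k - 1) := Nat.div_le_self _ _
                _ ≤ n k * n k := Nat.mul_le_mul_left _ (Nat.sub_le _ _)
          _ ≤ N * N := Nat.mul_le_mul (hNub k) (hNub k)
      have h2 := (Nat.cast_le (α := ℝ)).mpr h1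
      push_cast at h2
      nlinarith
    have hmnn : (0:ℝ) ≤ (Nat.choose (n k) 2 : ℝ) := Nat.cast_nonneg _
    show (A * ((Nat.choose (n k) 2 : ℝ)) * N) ^ 2
        ≤ A ^ 2 * (N:ℝ) ^ 6 * ((Nat.choose (n k) 2 : ℝ))
    have h5 : ((Nat.choose (n k) 2 : ℝ)) * ((Nat.choose (n k) 2 : ℝ))
        ≤ (N:ℝ) ^ 2 * ((Nat.choose (n k) 2 : ℝ)) :=
      mul_le_mul_of_nonneg_right hmle hmnn
    have h7 : (N:ℝ) ^ 4 ≤ (N:ℝ) ^ 6 := pow_le_pow_right₀ hNR (by norm_num)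
    calc (A * ((Nat.choose (n k) 2 : ℝ)) * N) ^ 2
        = (A ^ 2 * (N:ℝ) ^ 2) * (((Nat.choose (n k) 2 : ℝ)) * ((Nat.choose (n k) 2 : ℝ))) := by
          ring
      _ ≤ (A ^ 2 * (N:ℝ) ^ 2) * ((N:ℝ) ^ 2 * ((Nat.choose (n k) 2 : ℝ))) :=
          mul_le_mul_of_nonneg_left h5 (by positivity)
      _ = (A ^ 2 * ((Nat.choose (n k) 2 : ℝ))) * (N:ℝ) ^ 4 := by ring
      _ ≤ (A ^ 2 * ((Nat.choose (n k) 2 : ℝ))) * (N:ℝ) ^ 6 :=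
          mul_le_mul_of_nonneg_left h7 (mul_nonneg (sq_nonneg A) hmnn)
      _ = A ^ 2 * (N:ℝ) ^ 6 * ((Nat.choose (n k) 2 : ℝ)) := by ring
  -- exponent comparison
  have hexple : Real.exp (-(t ^ 2) / (2 * V))
      ≤ Real.exp (-(ε ^ 2 * MR) / (2 * A ^ 2 * (N:ℝ) ^ 6)) := by
    apply Real.exp_le_exp.mpr
    rw [neg_div, neg_div, neg_le_neg_iff, div_le_div_iff₀ (by positivity) (by positivity)]
    rw [htdef]
    nlinarith [hVle, hMRpos, hε, sq_nonneg ε, hVpos, hMR1]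
  -- MGF bounds
  have hWp : ∀ x : Cfg K n, (∏ k, w k (x k)) = p x := fun x => (hpW x).symm
  have mgf1 : ∑ x : Cfg K n, p x * Real.exp (lam * (f x - Ef))
      ≤ Real.exp (lam ^ 2 * V / 2) := by
    have h := mcd_mgf K (fun k => Fin (Nat.choose (n k) 2) → Bool) (fun _ => inferInstance)
      w hw hw1 f c hbd lam
    simp only [hWp] at h
    rw [← hVdef] at h
    simp only [← hEfdef] at h
    exact h
  have mgf2 : ∑ x : Cfg K n, p x * Real.exp (lam * (Ef - f x))
      ≤ Real.exp (lam ^ 2 * V / 2) := by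
    have hbd2 : ∀ (x : Cfg K n) (k : Fin K) (v : Fin (Nat.choose (n k) 2) → Bool),
        |(fun z : Cfg K n => -f z) (Function.update x k v) - (fun z : Cfg K n => -f z) x| ≤ c k := by
      intro x k v
      have : (fun z : Cfg K n => -f z) (Function.update x k v) - (fun z : Cfg K n => -f z) x
          = -(f (Function.update x k v) - f x) := by simp; ring
      rw [this, abs_neg]
      exact hbd x k v
    have h := mcd_mgf K (fun k => Fin (Nat.choose (n k) 2) → Bool) (fun _ => inferInstance)
      w hw hw1 (fun z : Cfg K n => -f z) c hbd2 lam
    simp only [hWp] at h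
    rw [← hVdef] at h
    have hEneg : (∑ y : Cfg K n, p y * -f y) = -Ef := by
      rw [hEfdef, ← Finset.sum_neg_distrib]
      exact Finset.sum_congr rfl fun y _ => by ring
    simp only [hEneg] at h
    have hexp : ∀ x : Cfg K n, lam * (-f x - -Ef) = lam * (Ef - f x) := fun x => by ring
    simp only [hexp] at h
    exact h
  -- tail bounds
  have heqexp : -(lam * t) + lam ^ 2 * V / 2 = -(t ^ 2) / (2 * V) := by
    rw [hlamdef]
    field_simp
    ring
  have tail1 : ∑ x ∈ Finset.univ.filter (fun x : Cfg K n => t ≤ f x - Ef), p x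
      ≤ Real.exp (-(ε ^ 2 * MR) / (2 * A ^ 2 * (N:ℝ) ^ 6)) := by
    refine le_trans (chernoff_fin p hppos (fun x => f x - Ef) t lam hlampos.le) ?_
    refine le_trans (mul_le_mul_of_nonneg_left mgf1 (Real.exp_nonneg _)) ?_
    rw [← Real.exp_add, heqexp]
    exact hexple
  have tail2 : ∑ x ∈ Finset.univ.filter (fun x : Cfg K n => t ≤ Ef - f x), p x
      ≤ Real.exp (-(ε ^ 2 * MR) / (2 * A ^ 2 * (N:ℝ) ^ 6)) := by
    refine le_trans (chernoff_fin p hppos (fun x => Ef - f x) t lam hlampos.le) ?_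
    refine le_trans (mul_le_mul_of_nonneg_left mgf2 (Real.exp_nonneg _)) ?_
    rw [← Real.exp_add, heqexp]
    exact hexple
  -- assemble
  rw [tsum_fintype]
  rw [← Finset.sum_subtype
    (Finset.univ.filter (fun x : Cfg K n =>
      ε * MR ≤ |∑ i, a i * (b x i - ∑ y : Cfg K n, p y * b y i)|))
    (fun x => by simp [htdef]) p]
  set S1 : Finset (Cfg K n) := Finset.univ.filter (fun x : Cfg K n => t ≤ f x - Ef) with hS1
  set S2 : Finset (Cfg K n) := Finset.univ.filter (fun x : Cfg K n => t ≤ Ef - f x) with hS2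
  have hsub : Finset.univ.filter (fun x : Cfg K n =>
      ε * MR ≤ |∑ i, a i * (b x i - ∑ y : Cfg K n, p y * b y i)|) ⊆ S1 ∪ S2 := by
    intro x hx
    rw [Finset.mem_filter] at hx
    have hx2 : t ≤ |f x - Ef| := by
      rw [htdef]
      rw [hEfx x] at hx
      exact hx.2
    rcases le_abs.mp hx2 with h | h
    · exact Finset.mem_union_left _ (Finset.mem_filter.mpr ⟨Finset.mem_univ x, h⟩)
    · rw [neg_sub] at h
      exact Finset.mem_union_right _ (Finset.mem_filter.mpr ⟨Finset.mem_univ x, h⟩)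
  have hle1 := Finset.sum_le_sum_of_subset_of_nonneg hsub (fun x _ _ => hppos x)
  have hle2 : ∑ x ∈ S1 ∪ S2, p x ≤ (∑ x ∈ S1, p x) + ∑ x ∈ S2, p x := by
    have h := Finset.sum_union_inter (s₁ := S1) (s₂ := S2) (f := p)
    have hnn : 0 ≤ ∑ x ∈ S1 ∩ S2, p x := Finset.sum_nonneg fun x _ => hppos x
    linarith
  calc _ ≤ ∑ x ∈ S1 ∪ S2, p x := hle1
    _ ≤ (∑ x ∈ S1, p x) + ∑ x ∈ S2, p x := hle2
    _ ≤ Real.exp (-(ε ^ 2 * MR) / (2 * A ^ 2 * (N:ℝ) ^ 6))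
        + Real.exp (-(ε ^ 2 * MR) / (2 * A ^ 2 * (N:ℝ) ^ 6)) := add_le_add tail1 tail2
    _ = 2 * Real.exp (-(ε ^ 2 * MR) / (2 * A ^ 2 * (N:ℝ) ^ 6)) := by ring
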